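/- Let p ∈ [1, 2). For every integer k ≥ 1, the coefficient of z^k (and of z^{−k}) in the Laurent expansion of f_p(z) = |(z−1)/2|^p = (1 − (2 + z + z^{−1})/4)^{p/2} on the unit circle is strictly negative. -/

import Mathlib

open MeasureTheory

/-- The `k`-th Laurent (Fourier) coefficient of a function on the unit circle,
written in the angular variable: `c_k = (1/(2π)) ∫_0^{2π} f(e^{iθ}) e^{-ikθ} dθ`. -/
noncomputable def laurentCoeff (f : ℂ → ℝ) (k : ℤ) : ℂ :=
  (1 / (2 * Real.pi) : ℂ) *
    ∫ θ in (0:ℝ)..(2 * Real.pi),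
      (f (Complex.exp (θ * Complex.I)) : ℂ) * Complex.exp (-(k : ℂ) * θ * Complex.I)

open Finset intervalIntegral


noncomputable def bc (α : ℝ) (m : ℕ) : ℝ := (∏ j ∈ Finset.range m, (α - j)) / m.factorial

lemma bc_zero (α : ℝ) : bc α 0 = 1 := by simp [bc]

lemma bc_succ (α : ℝ) (m : ℕ) : bc α (m+1) * (m+1) = bc α m * (α - m) := by
  have h1 : ((m+1 : ℕ) : ℝ) ≠ 0 := by positivity
  have h2 : ((m.factorial : ℕ) : ℝ) ≠ 0 := Nat.cast_ne_zero.2 m.factorial_ne_zero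
  simp only [bc, Finset.prod_range_succ, Nat.factorial_succ]
  field_simp
  push_cast
  ring

lemma abs_bc_le {α : ℝ} (hα0 : 0 < α) (hα1 : α < 1) : ∀ m, |bc α m| ≤ 1 := by
  intro m
  induction m with
  | zero => simp [bc_zero]
  | succ n ih =>
    have h1 : (0:ℝ) < (n:ℝ) + 1 := by positivity
    have key : bc α (n+1) = bc α n * (α - n) / (n+1) := by
      field_simp
      linarith [bc_succ α n]
    rw [key, abs_div, abs_mul, abs_of_pos h1]
    rw [div_le_one h1]
    have h2 : |α - (n:ℝ)| ≤ (n:ℝ) + 1 := by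
      rw [abs_le]; constructor <;> nlinarith [Nat.cast_nonneg (α := ℝ) n]
    calc |bc α n| * |α - (n:ℝ)| ≤ 1 * ((n:ℝ)+1) :=
          mul_le_mul ih h2 (abs_nonneg _) zero_le_one
      _ = (n:ℝ) + 1 := one_mul _

lemma bc_summable {α : ℝ} (hα0 : 0 < α) (hα1 : α < 1) {y : ℝ} (hy : |y| < 1) :
    Summable (fun m => bc α m * y ^ m) := by
  apply Summable.of_norm_bounded (g := fun m => |y| ^ m)
    (summable_geometric_of_lt_one (abs_nonneg y) hy)
  intro m
  rw [norm_mul, norm_pow]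
  calc ‖bc α m‖ * ‖y‖ ^ m ≤ 1 * ‖y‖ ^ m := by
        apply mul_le_mul_of_nonneg_right (abs_bc_le hα0 hα1 m) (by positivity)
    _ = |y| ^ m := by rw [one_mul]; rfl

lemma bc_mul_summable {α : ℝ} (hα0 : 0 < α) (hα1 : α < 1) {y : ℝ} (hy : |y| < 1) :
    Summable (fun m : ℕ => (m : ℝ) * bc α m * y ^ m) := by
  have hy' : ‖(|y|)‖ < 1 := by rwa [Real.norm_eq_abs, abs_abs]
  have hs : Summable (fun m : ℕ => (m:ℝ) * |y| ^ m) := by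
    simpa using summable_pow_mul_geometric_of_norm_lt_one 1 hy'
  apply Summable.of_norm_bounded (g := fun m : ℕ => (m:ℝ) * |y| ^ m) hs
  · intro m
    rw [norm_mul, norm_mul, norm_pow]
    have : ‖(m:ℝ)‖ = (m:ℝ) := by simp
    rw [this]
    apply mul_le_mul_of_nonneg_right _ (by positivity)
    calc (m:ℝ) * ‖bc α m‖ ≤ (m:ℝ) * 1 := by
          apply mul_le_mul_of_nonneg_left (abs_bc_le hα0 hα1 m) (Nat.cast_nonneg m)
      _ = (m:ℝ) := mul_one _




noncomputable def Tf (α : ℝ) (z : ℝ) : ℝ := 1 + ∑' m : ℕ, bc α (m+1) * z^(m+1)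
noncomputable def Df (α : ℝ) (z : ℝ) : ℝ := ∑' m : ℕ, bc α (m+1) * ((m+1) * z^m)

lemma Tf_eq_tsum {α : ℝ} (hα0 : 0 < α) (hα1 : α < 1) {z : ℝ} (hz : |z| < 1) :
    Tf α z = ∑' m : ℕ, bc α m * z^m := by
  rw [Tf, Summable.tsum_eq_zero_add (bc_summable hα0 hα1 hz)]
  simp [bc_zero]

lemma hasDerivAt_Tf {α : ℝ} (hα0 : 0 < α) (hα1 : α < 1) {r : ℝ} (hr0 : 0 < r) (hr1 : r < 1)
    {z : ℝ} (hz : z ∈ Set.Ioo (-r) r) : HasDerivAt (Tf α) (Df α z) z := by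
  have key : HasDerivAt (fun z => ∑' m : ℕ, bc α (m+1) * z^(m+1)) (Df α z) z := by
    refine hasDerivAt_tsum_of_isPreconnected
      (u := fun m : ℕ => ((m:ℝ)+1) * r^m)
      (g := fun m z => bc α (m+1) * z^(m+1))
      (g' := fun m z => bc α (m+1) * ((m+1) * z^m))
      (y₀ := 0)
      ?hu isOpen_Ioo ((convex_Ioo _ _).isPreconnected) ?hg ?hg' ?hy0 ?hg0 hz
    case hu =>
      have hr : ‖r‖ < 1 := by rwa [Real.norm_eq_abs, abs_of_pos hr0]
      have h1 : Summable (fun m : ℕ => (m:ℝ) * r^m) := by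
        simpa using summable_pow_mul_geometric_of_norm_lt_one 1 hr
      have h2 : Summable (fun m : ℕ => r^m) := summable_geometric_of_lt_one hr0.le hr1
      simpa [add_mul] using h1.add h2
    case hg =>
      intro n y _
      have h := (hasDerivAt_pow (n+1) y).const_mul (bc α (n+1))
      simpa using h
    case hg' =>
      intro n y hy
      have hyr : |y| ≤ r := by
        rw [abs_le]; exact ⟨hy.1.le, hy.2.le⟩
      have h2 : |y|^n ≤ r^n := pow_le_pow_left₀ (abs_nonneg y) hyr n
      have e : ‖bc α (n+1) * (((n:ℝ)+1) * y^n)‖ = |bc α (n+1)| * (((n:ℝ)+1) * |y|^n) := by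
        rw [Real.norm_eq_abs, abs_mul, abs_mul, abs_pow]
        congr 2
        rw [abs_of_nonneg (by positivity)]
      rw [e]
      calc |bc α (n+1)| * (((n:ℝ)+1) * |y|^n)
          ≤ 1 * (((n:ℝ)+1) * r^n) :=
            mul_le_mul (abs_bc_le hα0 hα1 (n+1))
              (mul_le_mul_of_nonneg_left h2 (by positivity)) (by positivity) zero_le_one
        _ = ((n:ℝ)+1) * r^n := one_mul _
    case hy0 => exact Set.mem_Ioo.2 ⟨by linarith, hr0⟩
    case hg0 =>
      have : (fun m : ℕ => bc α (m+1) * (0:ℝ)^(m+1)) = fun _ => (0:ℝ) := by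
        funext m; simp
      rw [this]; exact summable_zero
  exact key.const_add 1

lemma ode {α : ℝ} (hα0 : 0 < α) (hα1 : α < 1) {z : ℝ} (hz : |z| < 1) :
    (1 + z) * Df α z = α * Tf α z := by
  have hS : Summable (fun m : ℕ => bc α m * z^m) := bc_summable hα0 hα1 hz
  have hW : Summable (fun m : ℕ => (m:ℝ) * bc α m * z^m) := bc_mul_summable hα0 hα1 hz
  have hD : Df α z = α * (∑' m : ℕ, bc α m * z^m) - ∑' m : ℕ, (m:ℝ) * bc α m * z^m := by
    rw [Df, ← tsum_mul_left, ← Summable.tsum_sub (hS.mul_left α) hW]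
    apply tsum_congr
    intro m
    have h := bc_succ α m
    have e1 : bc α (m+1) * (((m:ℝ)+1) * z^m) = (bc α (m+1) * ((m:ℝ)+1)) * z^m := by
      ring
    rw [e1, h]
    ring
  have hzD : z * Df α z = ∑' m : ℕ, (m:ℝ) * bc α m * z^m := by
    rw [Df, ← tsum_mul_left, Summable.tsum_eq_zero_add hW]
    simp only [Nat.cast_zero, zero_mul, zero_add]
    apply tsum_congr
    intro m
    push_cast
    ring
  have hTS : Tf α z = ∑' m : ℕ, bc α m * z^m := Tf_eq_tsum hα0 hα1 hz
  rw [add_mul, one_mul, hzD, hD, hTS]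
  ring

lemma binomial_hasSum {α : ℝ} (hα0 : 0 < α) (hα1 : α < 1) {x : ℝ} (hx0 : 0 ≤ x) (hx1 : x < 1) :
    HasSum (fun m => bc α m * (-x)^m) ((1-x)^α) := by
  set r : ℝ := (1+x)/2 with hr_def
  have hr0 : 0 < r := by positivity
  have hr1 : r < 1 := by rw [hr_def]; linarith
  have hxr : x < r := by rw [hr_def]; linarith
  set g : ℝ → ℝ := fun z => Tf α z * (1+z) ^ (-α) with hg_def
  have hderiv : ∀ z ∈ Set.Ioo (-r) r, HasDerivAt g 0 z := by
    intro z hz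
    have hz1 : (0:ℝ) < 1 + z := by have h := hz.1; simp only [Set.mem_Ioo] at hz; linarith [hz.1]
    have h1 : HasDerivAt (Tf α) (Df α z) z := hasDerivAt_Tf hα0 hα1 hr0 hr1 hz
    have h2 : HasDerivAt (fun z : ℝ => (1+z) ^ (-α)) (-α * (1+z) ^ (-α-1)) z := by
      have hb : HasDerivAt (fun z : ℝ => 1 + z) 1 z := by
        simpa using (hasDerivAt_id z).const_add 1
      have := hb.rpow_const (p := -α) (Or.inl hz1.ne')
      simpa using this
    have h3 := h1.mul h2
    have h4 : HasDerivAt g (Df α z * (1 + z) ^ (-α) + Tf α z * (-α * (1 + z) ^ (-α - 1))) z := h3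
    convert h4 using 1
    have hode : (1 + z) * Df α z = α * Tf α z := by
      apply ode hα0 hα1
      simp only [Set.mem_Ioo] at hz
      rw [abs_lt]; exact ⟨by linarith [hz.1], by linarith [hz.2]⟩
    have hrw : (1+z) ^ (-α-1) = (1+z)^(-α) / (1+z) := by
      rw [Real.rpow_sub hz1, Real.rpow_one]
    have hDf : Df α z = α * Tf α z / (1 + z) := by
      field_simp
      linarith [hode]
    rw [hrw, hDf]
    field_simp
    ring
  have hcont : ContinuousOn g (Set.Icc (-x) 0) := by
    intro y hy
    have hy' : y ∈ Set.Ioo (-r) r := ⟨by linarith [hy.1], by linarith [hy.2]⟩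
    exact ((hderiv y hy').continuousAt).continuousWithinAt
  have hconst := constant_of_has_deriv_right_zero hcont (fun y hy => by
    have hy' : y ∈ Set.Ioo (-r) r := ⟨by linarith [hy.1], by linarith [hy.2]⟩
    exact (hderiv y hy').hasDerivWithinAt)
  have hT0 : Tf α 0 = 1 := by
    have h : ∑' m : ℕ, bc α (m+1) * (0:ℝ)^(m+1) = 0 := by
      convert tsum_zero with m
      simp
    rw [Tf, h]; norm_num
  have h0 : g 0 = 1 := by
    rw [hg_def]; norm_num [hT0, Real.one_rpow]
  have hx' : (0:ℝ) ∈ Set.Icc (-x) 0 := by constructor <;> linarith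
  have heq := hconst 0 hx'
  have hgx : g (-x) = 1 := by rw [← heq, h0]
  have h1x : (0:ℝ) < 1 - x := by linarith
  have hTfx : Tf α (-x) = (1-x)^α := by
    rw [hg_def] at hgx
    simp only [] at hgx
    have he : (1 + -x : ℝ) = 1 - x := by ring
    rw [he] at hgx
    have hinv : (1-x)^(-α) = ((1-x)^α)⁻¹ := Real.rpow_neg h1x.le α
    rw [hinv] at hgx
    have hpos : (0:ℝ) < (1-x)^α := Real.rpow_pos_of_pos h1x _
    field_simp at hgx
    linarith [hgx]
  have hxabs : |(-x)| < 1 := by rw [abs_neg, abs_of_nonneg hx0]; exact hx1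
  have hsum : Summable (fun m => bc α m * (-x)^m) := bc_summable hα0 hα1 hxabs
  have hh := hsum.hasSum
  rwa [← Tf_eq_tsum hα0 hα1 hxabs, hTfx] at hh


noncomputable def xc (θ : ℝ) : ℝ := (1 + Real.cos θ) / 2

def Ncf (m : ℕ) (ℓ : ℤ) : ℕ :=
  if 0 ≤ (m:ℤ) + ℓ then Nat.choose (2*m) ((m:ℤ)+ℓ).toNat else 0

lemma orth (n : ℤ) : (∫ θ in (0:ℝ)..(2*Real.pi), Complex.exp ((n:ℂ) * θ * Complex.I))
    = if n = 0 then (2*Real.pi:ℂ) else 0 := by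
  by_cases hn : n = 0
  · simp [hn]
  · rw [if_neg hn]
    have hc : ((n:ℂ) * Complex.I) ≠ 0 := by
      simp [Complex.ext_iff, hn]
    have he : ∀ θ : ℝ, (n:ℂ) * θ * Complex.I = ((n:ℂ) * Complex.I) * θ := fun θ => by ring
    simp_rw [he]
    rw [integral_exp_mul_complex hc]
    have h1 : (n:ℂ) * Complex.I * (2*Real.pi:ℝ) = (n:ℂ) * (2*Real.pi*Complex.I) := by
      push_cast; ring
    have h2 : Complex.exp ((n:ℂ) * (2*Real.pi*Complex.I)) = 1 := Complex.exp_int_mul_two_pi_mul_I n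
    rw [h1, h2]
    simp

lemma xc_complex (θ : ℝ) :
    ((xc θ : ℝ) : ℂ) = (1 + Complex.exp (θ * Complex.I))^2 / (4 * Complex.exp (θ * Complex.I)) := by
  have hz : Complex.exp (θ * Complex.I) ≠ 0 := Complex.exp_ne_zero _
  have hcos : ((Real.cos θ : ℝ) : ℂ) = Complex.cos θ := (Complex.ofReal_cos θ).symm ▸ rfl
  have h2c := Complex.two_cos (x := (θ:ℂ))
  have hinv : Complex.exp (-(θ:ℂ) * Complex.I) = (Complex.exp ((θ:ℂ) * Complex.I))⁻¹ := by
    rw [← Complex.exp_neg]; ring_nf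
  rw [xc]
  push_cast
  rw [Complex.ofReal_cos] at *
  field_simp
  rw [show Complex.cos θ = (Complex.exp ((θ:ℂ)*Complex.I) + Complex.exp (-(θ:ℂ)*Complex.I))/2 from rfl, hinv]
  field_simp
  ring

lemma sum_ite_eval (m : ℕ) (ℓ : ℤ) :
    (∑ j ∈ range (2*m+1), (Nat.choose (2*m) j : ℂ) *
      (if ((j:ℤ) - m - ℓ) = 0 then (2*(Real.pi:ℂ)) else 0))
    = 2*Real.pi * Ncf m ℓ := by
  by_cases h : 0 ≤ (m:ℤ) + ℓ
  · set J : ℕ := ((m:ℤ)+ℓ).toNat with hJ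
    have hJ' : ((J:ℤ)) = (m:ℤ)+ℓ := Int.toNat_of_nonneg h
    have hiff : ∀ j : ℕ, ((j:ℤ) - m - ℓ = 0) ↔ j = J := by
      intro j
      constructor
      · intro hj
        have : (j:ℤ) = (J:ℤ) := by rw [hJ']; linarith
        exact_mod_cast this
      · intro hj
        subst hj
        rw [hJ']; ring
    simp_rw [hiff, mul_ite, mul_zero]
    rw [Finset.sum_ite_eq' (range (2*m+1)) J (fun j => (Nat.choose (2*m) j : ℂ) * (2*Real.pi))]
    by_cases hJr : J ∈ range (2*m+1)
    case pos =>
      rw [if_pos hJr, Ncf, if_pos h]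
      push_cast
      ring
    case neg =>
      rw [if_neg hJr, Ncf, if_pos h]
      have : 2*m < J := by
        simp [Finset.mem_range] at hJr
        omega
      rw [Nat.choose_eq_zero_of_lt this]
      simp
  · have : ∀ j ∈ range (2*m+1), (Nat.choose (2*m) j : ℂ) *
      (if ((j:ℤ) - m - ℓ) = 0 then (2*(Real.pi:ℂ)) else 0) = 0 := by
      intro j _
      rw [if_neg, mul_zero]
      intro hj
      omega
    rw [Finset.sum_congr rfl this, Finset.sum_const, Ncf, if_neg h]
    simp

lemma exp_combine (θ : ℝ) (m j : ℕ) (ℓ : ℤ) :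
    Complex.exp (θ * Complex.I) ^ j * (Complex.exp (θ * Complex.I))⁻¹ ^ m *
      Complex.exp (-(ℓ:ℂ) * θ * Complex.I)
    = Complex.exp ((((j:ℤ) - m - ℓ : ℤ) : ℂ) * θ * Complex.I) := by
  rw [← Complex.exp_neg, ← Complex.exp_nat_mul, ← Complex.exp_nat_mul, ← Complex.exp_add,
    ← Complex.exp_add]
  congr 1
  push_cast
  ring

lemma xc_pow_integral (m : ℕ) (ℓ : ℤ) :
    (∫ θ in (0:ℝ)..(2*Real.pi), ((xc θ : ℝ):ℂ)^m * Complex.exp (-(ℓ:ℂ) * θ * Complex.I))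
    = 2*Real.pi * (4:ℂ)⁻¹^m * Ncf m ℓ := by
  have key : ∀ θ : ℝ, ((xc θ : ℝ):ℂ)^m * Complex.exp (-(ℓ:ℂ) * θ * Complex.I)
      = ∑ j ∈ range (2*m+1), ((Nat.choose (2*m) j : ℂ) * (4:ℂ)⁻¹^m) *
          Complex.exp ((((j:ℤ) - m - ℓ : ℤ) : ℂ) * θ * Complex.I) := by
    intro θ
    set z : ℂ := Complex.exp (θ * Complex.I) with hz_def
    have hz : z ≠ 0 := Complex.exp_ne_zero _
    have h1 : ((xc θ : ℝ):ℂ)^m = (4:ℂ)⁻¹^m * ((1+z)^(2*m) * (z⁻¹)^m) := by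
      rw [xc_complex θ, ← hz_def]
      rw [div_pow, ← pow_mul, mul_pow]
      rw [inv_pow, inv_pow, div_eq_mul_inv, mul_inv]
      ring
    rw [h1]
    have h2 : (1+z)^(2*m) = ∑ j ∈ range (2*m+1), z^j * (Nat.choose (2*m) j : ℂ) := by
      rw [add_comm]
      rw [add_pow]
      apply Finset.sum_congr rfl
      intro j _
      rw [one_pow, mul_one]
    rw [h2, Finset.sum_mul, Finset.mul_sum, Finset.sum_mul]
    apply Finset.sum_congr rfl
    intro j _
    rw [← exp_combine θ m j ℓ, ← hz_def]
    ring
  simp_rw [key]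
  rw [intervalIntegral.integral_finset_sum]
  · have : ∀ j ∈ range (2*m+1),
        (∫ θ in (0:ℝ)..(2*Real.pi), ((Nat.choose (2*m) j : ℂ) * (4:ℂ)⁻¹^m) *
          Complex.exp ((((j:ℤ) - m - ℓ : ℤ) : ℂ) * θ * Complex.I))
        = ((Nat.choose (2*m) j : ℂ) * (4:ℂ)⁻¹^m) *
            (if ((j:ℤ) - m - ℓ) = 0 then (2*(Real.pi:ℂ)) else 0) := by
      intro j _
      rw [intervalIntegral.integral_const_mul, orth]
    rw [Finset.sum_congr rfl this]
    have e : ∀ j ∈ range (2*m+1), ((Nat.choose (2*m) j : ℂ) * (4:ℂ)⁻¹^m) *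
        (if ((j:ℤ) - m - ℓ) = 0 then (2*(Real.pi:ℂ)) else 0)
        = (4:ℂ)⁻¹^m * ((Nat.choose (2*m) j : ℂ) *
          (if ((j:ℤ) - m - ℓ) = 0 then (2*(Real.pi:ℂ)) else 0)) := by
      intro j _; ring
    rw [Finset.sum_congr rfl e, ← Finset.mul_sum, sum_ite_eval]
    ring
  · intro j _
    apply Continuous.intervalIntegrable
    fun_prop



lemma continuous_xc : Continuous xc := by unfold xc; fun_prop

lemma xc_nonneg (θ : ℝ) : 0 ≤ xc θ := by
  have := Real.neg_one_le_cos θ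
  unfold xc; linarith

lemma xc_lt_one {θ : ℝ} (hθ : θ ∈ Set.Ioo (0:ℝ) (2*Real.pi)) : xc θ < 1 := by
  have h1 : Real.cos θ ≤ 1 := Real.cos_le_one θ
  have h2 : Real.cos θ ≠ 1 := by
    intro h
    rcases (Real.cos_eq_one_iff θ).1 h with ⟨n, hn⟩
    have hpi := Real.pi_pos
    rcases hθ with ⟨hθ1, hθ2⟩
    rcases lt_trichotomy n 0 with h | h | h
    · have hn1 : n ≤ -1 := by omega
      have : (n:ℝ) ≤ -1 := by exact_mod_cast hn1
      nlinarith
    · subst h; simp at hn; linarith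
    · have : (1:ℝ) ≤ (n:ℝ) := by exact_mod_cast h
      nlinarith
  unfold xc
  have : Real.cos θ < 1 := lt_of_le_of_ne h1 h2
  linarith

lemma absSqEq (θ : ℝ) :
    ‖(Complex.exp (θ * Complex.I) - 1)/2‖^(2:ℕ) = 1 - xc θ := by
  rw [Complex.sq_norm, map_div₀]
  have hre : (Complex.exp (θ * Complex.I) - 1).re = Real.cos θ - 1 := by
    simp [Complex.exp_ofReal_mul_I_re]
  have him : (Complex.exp (θ * Complex.I) - 1).im = Real.sin θ := by
    simp [Complex.exp_ofReal_mul_I_im]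
  rw [Complex.normSq_apply, hre, him]
  have h2 : Complex.normSq 2 = 4 := by
    simp [Complex.normSq_apply]
    norm_num
  rw [h2]
  have hs := Real.sin_sq_add_cos_sq θ
  unfold xc
  nlinarith [hs]

lemma point_val (p : ℝ) (θ : ℝ) :
    ‖(Complex.exp (θ * Complex.I) - 1)/2‖^p = (1 - xc θ)^(p/2) := by
  set t := ‖(Complex.exp (θ * Complex.I) - 1)/2‖ with ht
  have ht0 : 0 ≤ t := norm_nonneg _
  have h2 : t^(2:ℕ) = 1 - xc θ := absSqEq θ
  rw [← h2]
  rw [← Real.rpow_natCast t 2, ← Real.rpow_mul ht0]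
  congr 1
  push_cast
  ring




lemma bc_one (α : ℝ) : bc α 1 = α := by simp [bc]

lemma bc_sign {α : ℝ} (hα0 : 0 < α) (hα1 : α < 1) : ∀ m, 1 ≤ m → bc α m * (-1)^m < 0 := by
  intro m hm
  induction m with
  | zero => omega
  | succ n ih =>
    rcases Nat.lt_or_ge n 1 with hn | hn
    · interval_cases n
      simp [bc_one]
      exact hα0
    · have h1 := ih hn
      have h2 := bc_succ α n
      have hn1 : (0:ℝ) < (n:ℝ) + 1 := by positivity
      have hne : (1:ℝ) ≤ (n:ℝ) := by exact_mod_cast hn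
      have key : bc α (n+1) = bc α n * (α - n) / (n+1) := by
        field_simp
        linarith [h2]
      rw [key, pow_succ]
      have : bc α n * (α - n) / (n+1) * ((-1)^n * -1)
          = (bc α n * (-1)^n) * ((n - α) / (n+1)) := by ring
      rw [this]
      apply mul_neg_of_neg_of_pos h1
      apply div_pos (by linarith) hn1

lemma hasSum_abs_bc {α : ℝ} (hα0 : 0 < α) (hα1 : α < 1) {x : ℝ} (hx0 : 0 ≤ x) (hx1 : x < 1) :
    HasSum (fun m => |bc α m| * x^m) (2 - (1-x)^α) := by
  have h1 := (binomial_hasSum hα0 hα1 hx0 hx1).neg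
  have h2 : HasSum (fun m : ℕ => if m = 0 then (2:ℝ) else 0) 2 := hasSum_ite_eq 0 2
  have h3 := h1.add h2
  have he : (fun m : ℕ => -(bc α m * (-x)^m) + (if m = 0 then (2:ℝ) else 0))
      = fun m => |bc α m| * x^m := by
    funext m
    match m with
    | 0 => simp [bc_zero]; norm_num
    | (n+1) =>
      have hs := bc_sign hα0 hα1 (n+1) (Nat.succ_le_succ (Nat.zero_le n))
      have habs : |bc α (n+1)| = -(bc α (n+1) * (-1)^(n+1)) := by
        rw [show |bc α (n+1)| = |bc α (n+1) * (-1)^(n+1)| by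
          rw [abs_mul, abs_pow, abs_neg, abs_one, one_pow, mul_one]]
        exact abs_of_neg hs
      simp only [if_neg (Nat.succ_ne_zero n), add_zero]
      rw [habs, neg_pow]
      ring
  have : -(1-x)^α + 2 = 2 - (1-x)^α := by ring
  rw [he, this] at h3
  exact h3

lemma main_neg (p : ℝ) (hα0 : 0 < p/2) (hα1 : p/2 < 1) (ℓ : ℤ) (hℓ : ℓ ≠ 0)
    (m₀ : ℕ) (hm₀ : 1 ≤ m₀) (hN : Ncf m₀ ℓ ≠ 0) :
    ∃ c : ℝ, c < 0 ∧ laurentCoeff (fun z => ‖(z - 1) / 2‖^p) ℓ = (c : ℂ) := by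
  have hπ := Real.pi_pos
  set α := p/2 with hα_def
  set d : ℕ → ℝ := fun m => bc α m * (-1)^m * (4:ℝ)⁻¹^m * (Ncf m ℓ : ℝ) with hd_def
  set T : ℕ → ℝ → ℂ := fun m θ =>
    ((bc α m * (-1)^m : ℝ) : ℂ) *
      (((xc θ : ℝ):ℂ)^m * Complex.exp (-(ℓ:ℂ) * θ * Complex.I)) with hT_def
  set S₂ : Set ℝ := Set.Ioc (0:ℝ) (2*Real.pi) with hS₂_def
  have hle : (0:ℝ) ≤ 2*Real.pi := by positivity
  -- continuity and integrability
  have hTcont : ∀ m, Continuous (T m) := by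
    intro m
    apply Continuous.mul continuous_const
    apply Continuous.mul
    · exact (Complex.continuous_ofReal.comp continuous_xc).pow m
    · apply Complex.continuous_exp.comp
      fun_prop
  have hTint : ∀ m, IntegrableOn (T m) S₂ := fun m => (hTcont m).integrableOn_Ioc
  -- norm computation
  have hnorm : ∀ m θ, ‖T m θ‖ = |bc α m| * (xc θ)^m := by
    intro m θ
    rw [hT_def]
    simp only []
    rw [norm_mul, norm_mul, norm_pow]
    have h1 : ‖((bc α m * (-1)^m : ℝ):ℂ)‖ = |bc α m| := by
      rw [Complex.norm_real, Real.norm_eq_abs, abs_mul, abs_pow, abs_neg, abs_one,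
        one_pow, mul_one]
    have h2 : ‖((xc θ : ℝ):ℂ)‖ = xc θ := by
      rw [Complex.norm_real, Real.norm_eq_abs, abs_of_nonneg (xc_nonneg θ)]
    have h3 : ‖Complex.exp (-(ℓ:ℂ) * θ * Complex.I)‖ = 1 := by
      have he : -(ℓ:ℂ) * θ * Complex.I = ((-(ℓ:ℝ) * θ : ℝ):ℂ) * Complex.I := by
        push_cast; ring
      rw [he, Complex.norm_exp_ofReal_mul_I]
    rw [h1, h2, h3, mul_one]
  -- integral of norms
  have hIic : ∀ m, (∫ θ in S₂, ‖T m θ‖) = |bc α m| * ∫ θ in S₂, (xc θ)^m := by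
    intro m
    simp_rw [hnorm]
    rw [MeasureTheory.integral_const_mul]
  have hInonneg : ∀ m, 0 ≤ ∫ θ in S₂, (xc θ)^m := by
    intro m
    apply setIntegral_nonneg measurableSet_Ioc
    intro θ _
    exact pow_nonneg (xc_nonneg θ) m
  -- summability of integral norms
  have hsum_norm : Summable (fun m => ∫ θ in S₂, ‖T m θ‖) := by
    apply summable_of_sum_range_le (c := 2 * (2*Real.pi))
    · intro m
      rw [hIic]
      exact mul_nonneg (abs_nonneg _) (hInonneg m)
    · intro n
      have e1 : ∑ m ∈ Finset.range n, ∫ θ in S₂, ‖T m θ‖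
          = ∫ θ in S₂, (∑ m ∈ Finset.range n, |bc α m| * (xc θ)^m) := by
        rw [MeasureTheory.integral_finset_sum]
        · apply Finset.sum_congr rfl
          intro m _
          simp_rw [hnorm]
        · intro m _
          show IntegrableOn (fun θ => |bc α m| * xc θ ^ m) (Set.Ioc (0:ℝ) (2*Real.pi)) volume
          exact (continuous_const.mul (continuous_xc.pow m)).integrableOn_Ioc
      rw [e1]
      have e2 : ∫ θ in S₂, (∑ m ∈ Finset.range n, |bc α m| * (xc θ)^m)
          = ∫ θ in Set.Ioo (0:ℝ) (2*Real.pi), (∑ m ∈ Finset.range n, |bc α m| * (xc θ)^m) := by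
        rw [hS₂_def, integral_Ioc_eq_integral_Ioo]
      rw [e2]
      have hbound : ∀ θ ∈ Set.Ioo (0:ℝ) (2*Real.pi),
          (∑ m ∈ Finset.range n, |bc α m| * (xc θ)^m) ≤ 2 := by
        intro θ hθ
        have hx0 := xc_nonneg θ
        have hx1 := xc_lt_one hθ
        have hhs := hasSum_abs_bc hα0 hα1 hx0 hx1
        have hle1 : ∑ m ∈ Finset.range n, |bc α m| * (xc θ)^m ≤ 2 - (1 - xc θ)^α := by
          apply sum_le_hasSum _ _ hhs
          intro m _
          exact mul_nonneg (abs_nonneg _) (pow_nonneg hx0 m)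
        have : (0:ℝ) ≤ (1 - xc θ)^α := Real.rpow_nonneg (by linarith) α
        linarith
      calc ∫ θ in Set.Ioo (0:ℝ) (2*Real.pi), (∑ m ∈ Finset.range n, |bc α m| * (xc θ)^m)
          ≤ ∫ _ in Set.Ioo (0:ℝ) (2*Real.pi), (2:ℝ) := by
            apply setIntegral_mono_on
            · exact ((continuous_finset_sum _ fun m _ =>
                continuous_const.mul (continuous_xc.pow m)).integrableOn_Icc).mono_set
                Set.Ioo_subset_Icc_self
            · exact integrableOn_const measure_Ioo_lt_top.ne
            · exact measurableSet_Ioo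
            · exact hbound
        _ ≤ 2 * (2*Real.pi) := by
            rw [setIntegral_const]
            rw [measureReal_def, Real.volume_Ioo]
            simp [smul_eq_mul]
            rw [ENNReal.toReal_ofReal (by linarith)]
            linarith
  -- the main interchange
  have hswap := hasSum_integral_of_summable_integral_norm
    (fun m => hTint m) hsum_norm
  -- value of each integral
  have hval : ∀ m, (∫ θ in S₂, T m θ) = ((2*Real.pi * d m : ℝ) : ℂ) := by
    intro m
    have h1 : (∫ θ in S₂, T m θ) = ((bc α m * (-1)^m : ℝ):ℂ) *
        ∫ θ in S₂, (((xc θ:ℝ):ℂ)^m * Complex.exp (-(ℓ:ℂ)*θ*Complex.I)) := by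
      rw [hT_def]
      exact MeasureTheory.integral_const_mul _ _
    rw [h1, hS₂_def, ← intervalIntegral.integral_of_le hle, xc_pow_integral]
    rw [hd_def]
    push_cast
    ring
  simp_rw [hval] at hswap
  -- real parts
  have hre : HasSum (fun m => 2*Real.pi * d m) ((∫ θ in S₂, (∑' m, T m θ)).re) := by
    have := hswap.mapL Complex.reCLM
    simpa using this
  set c : ℝ := (∫ θ in S₂, (∑' m, T m θ)).re / (2*Real.pi) with hc_def
  have h2πne : (2*Real.pi : ℝ) ≠ 0 := by positivity
  have hrec : (∫ θ in S₂, (∑' m, T m θ)).re = 2*Real.pi * c := by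
    rw [hc_def]; field_simp
  have hd : HasSum d c := by
    rw [hrec] at hre
    exact (hasSum_mul_left_iff h2πne).mp hre
  -- S is real
  have hSreal : (∫ θ in S₂, (∑' m, T m θ)) = ((2*Real.pi * c : ℝ) : ℂ) := by
    have h1 := hre.mapL Complex.ofRealCLM
    have h2 : HasSum (fun m => ((2*Real.pi * d m : ℝ):ℂ))
        (((∫ θ in S₂, (∑' m, T m θ)).re : ℝ) : ℂ) := by simpa using h1
    rw [← hrec]
    exact hswap.unique h2
  -- identify the integral with the Laurent integrand
  have hae : (∫ θ in S₂, (∑' m, T m θ))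
      = ∫ θ in S₂, (‖(Complex.exp (θ*Complex.I) - 1)/2‖^p : ℝ) *
          Complex.exp (-(ℓ:ℂ)*θ*Complex.I) := by
    rw [hS₂_def, integral_Ioc_eq_integral_Ioo, integral_Ioc_eq_integral_Ioo]
    apply setIntegral_congr_fun measurableSet_Ioo
    intro θ hθ
    have hx0 := xc_nonneg θ
    have hx1 := xc_lt_one hθ
    have hbin := binomial_hasSum hα0 hα1 hx0 hx1
    have h2 := (hbin.mapL Complex.ofRealCLM).mul_right (Complex.exp (-(ℓ:ℂ)*θ*Complex.I))
    have he : (fun m => (Complex.ofRealCLM (bc α m * (-(xc θ))^m)) *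
        Complex.exp (-(ℓ:ℂ)*θ*Complex.I)) = fun m => T m θ := by
      funext m
      rw [hT_def]
      simp only [Complex.ofRealCLM_apply]
      rw [show (-(xc θ))^m = (-1:ℝ)^m * (xc θ)^m from by rw [neg_pow]]
      push_cast
      ring
    rw [he] at h2
    have ht := h2.tsum_eq
    rw [Complex.ofRealCLM_apply] at ht
    simp only []
    rw [ht, point_val p θ, hα_def]
  -- conclude the value of laurentCoeff
  have hlc : laurentCoeff (fun z => ‖(z - 1) / 2‖^p) ℓ = (c : ℂ) := by
    rw [laurentCoeff]
    have : (∫ θ in (0:ℝ)..(2*Real.pi),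
        (‖(Complex.exp (θ*Complex.I) - 1)/2‖^p : ℝ) *
          Complex.exp (-(ℓ:ℂ)*θ*Complex.I))
        = ((2*Real.pi * c : ℝ) : ℂ) := by
      rw [intervalIntegral.integral_of_le hle, ← hS₂_def, ← hae, hSreal]
    rw [this]
    push_cast
    rw [div_mul_eq_mul_div, one_mul]
    rw [mul_comm (2*(Real.pi:ℂ)) (c:ℂ), mul_div_assoc]
    rw [div_self (by push_cast; exact_mod_cast h2πne)]
    ring
  refine ⟨c, ?_, hlc⟩
  -- negativity
  have hd_nonpos : ∀ m, d m ≤ 0 := by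
    intro m
    match m with
    | 0 =>
      have hN0 : Ncf 0 ℓ = 0 := by
        rw [Ncf]
        simp only [Nat.cast_zero, zero_add, mul_zero]
        by_cases h : 0 ≤ ℓ
        · rw [if_pos h]
          apply Nat.choose_eq_zero_of_lt
          omega
        · rw [if_neg h]
      rw [hd_def]
      simp [hN0]
    | (n+1) =>
      have hs := bc_sign hα0 hα1 (n+1) (Nat.succ_le_succ (Nat.zero_le n))
      rw [hd_def]
      simp only []
      apply mul_nonpos_of_nonpos_of_nonneg
      · apply mul_nonpos_of_nonpos_of_nonneg hs.le (by positivity)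
      · positivity
  have hd_neg : d m₀ < 0 := by
    have hs := bc_sign hα0 hα1 m₀ hm₀
    rw [hd_def]
    simp only []
    apply mul_neg_of_neg_of_pos
    · apply mul_neg_of_neg_of_pos hs (by positivity)
    · have : 0 < Ncf m₀ ℓ := Nat.pos_of_ne_zero hN
      exact_mod_cast this
  have hneg := hd.neg
  have hle2 : -d m₀ ≤ -c := by
    apply le_hasSum hneg m₀
    intro b _
    simpa using hd_nonpos b
  linarith

theorem stmt_12 (p : ℝ) (hp : p ∈ Set.Ico (1:ℝ) 2) (k : ℤ) (hk : 1 ≤ k) :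
    (∃ c : ℝ, c < 0 ∧ laurentCoeff (fun z => ‖(z - 1) / 2‖^p) k = (c : ℂ))
    ∧ (∃ c : ℝ, c < 0 ∧
        laurentCoeff (fun z => ‖(z - 1) / 2‖^p) (-k) = (c : ℂ)) := by
  obtain ⟨hp1, hp2⟩ := hp
  have hα0 : 0 < p/2 := by linarith
  have hα1 : p/2 < 1 := by linarith
  have hm₀ : 1 ≤ k.toNat := by omega
  constructor
  · apply main_neg p hα0 hα1 k (by omega) k.toNat hm₀
    rw [Ncf, if_pos (by omega)]
    have h2 : ((k.toNat:ℤ) + k).toNat = 2 * k.toNat := by omega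
    rw [h2, Nat.choose_self]
    omega
  · apply main_neg p hα0 hα1 (-k) (by omega) k.toNat hm₀
    rw [Ncf, if_pos (by omega)]
    have h2 : ((k.toNat:ℤ) + -k).toNat = 0 := by omega
    rw [h2, Nat.choose_zero_right]
    omega
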